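/- Let α be a nonnegative random variable with finite expectation and continuous CDF F which is DMRL, let T ≥ 0, c ≥ 0, k = 3T + c, r_L = α_L − k, r_H = α_H − k, and assume r_H > 0. If r_L > 0 and E(α) − α_L ≤ α_L − 3T − c (= r_L), then the unique solution r* ∈ (0, r_H) of the fixed point equation r = m(k + r) is given explicitly by r* = (1/2)(E(α) − 3T − c). -/

import Mathlib

open MeasureTheory Set

/-- The mean residual lifetime function `m(t) = E[α − t ∣ α > t]` (with value `0` when
`P(α > t) = 0`, using the junk-value convention `x / 0 = 0`). -/
noncomputable def mrl (μ : Measure ℝ) (t : ℝ) : ℝ :=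
  (∫ x, max (x - t) 0 ∂μ) / (μ (Ioi t)).toReal

lemma mrl_of_le_essinf (μ : Measure ℝ) [IsProbabilityMeasure μ]
    (hint : Integrable id μ) (hcont : ∀ t : ℝ, μ {t} = 0)
    (αL : ℝ) (hae : ∀ᵐ x ∂μ, αL ≤ x) (t : ℝ) (ht : t ≤ αL) :
    mrl μ t = (∫ x, x ∂μ) - t := by
  have hlt : μ {x : ℝ | x < αL} = 0 := by
    have := hae
    rw [MeasureTheory.ae_iff] at this
    simpa [not_le] using this
  have hIic : μ (Iic t) = 0 := by
    have hsub : Iic t ⊆ {x : ℝ | x < αL} ∪ {t} := by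
      intro x hx
      rcases lt_or_ge x αL with h | h
      · exact Or.inl h
      · exact Or.inr (le_antisymm hx (le_trans ht h))
    refine le_antisymm ?_ zero_le
    calc μ (Iic t) ≤ μ ({x : ℝ | x < αL} ∪ {t}) := measure_mono hsub
      _ ≤ μ {x : ℝ | x < αL} + μ {t} := measure_union_le _ _
      _ = 0 := by rw [hlt, hcont]; simp
  have hIoi : μ (Ioi t) = 1 := by
    rw [← compl_Iic, measure_compl measurableSet_Iic (by simp), hIic, measure_univ]
    simp
  have hmax : (∫ x, max (x - t) 0 ∂μ) = ∫ x, x - t ∂μ := by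
    refine integral_congr_ae ?_
    filter_upwards [hae] with x hx
    exact max_eq_left (by linarith)
  have hsub : (∫ x, x - t ∂μ) = (∫ x, x ∂μ) - t := by
    have hi : Integrable (fun x : ℝ => x) μ := hint
    rw [integral_sub hi (integrable_const t)]
    simp
  unfold mrl
  rw [hmax, hsub, hIoi]
  simp

/-- Under DMRL, if `r_L = α_L − k > 0` and `E(α) − α_L ≤ r_L`, then the
unique solution `r* ∈ (0, r_H)` of `r = m(k + r)` is `r* = (1/2)(E(α) − 3T − c)`. -/
theorem stmt11 (μ : Measure ℝ) [IsProbabilityMeasure μ]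
    (hnonneg : μ (Iio 0) = 0) (hint : Integrable id μ) (hcont : ∀ t : ℝ, μ {t} = 0)
    (hdmrl : Antitone (mrl μ))
    (T c : ℝ) (hT : 0 ≤ T) (hc : 0 ≤ c) (k : ℝ) (hk : k = 3*T + c)
    (αL : ℝ) (hαL : essInf (fun x : ℝ => (x : EReal)) μ = (αL : EReal))
    (rH : EReal) (hrH : rH = essSup (fun x : ℝ => (x : EReal)) μ - (k : EReal))
    (hrHpos : 0 < rH)
    (hrLpos : 0 < αL - k)
    (hcond : (∫ x, x ∂μ) - αL ≤ αL - k) :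
    ∃ rstar : ℝ, (0 < rstar ∧ (rstar : EReal) < rH) ∧ rstar = mrl μ (k + rstar) ∧
      (∀ r : ℝ, 0 < r → (r : EReal) < rH → r = mrl μ (k + r) → r = rstar) ∧
      rstar = (1/2) * ((∫ x, x ∂μ) - (3*T + c)) := by
  set E := ∫ x, x ∂μ with hE
  -- a.e. lower bound
  have hae : ∀ᵐ x ∂μ, αL ≤ x := by
    have h := ae_essInf_le (f := fun x : ℝ => (x : EReal)) (μ := μ)
    rw [hαL] at h
    filter_upwards [h] with x hx
    exact_mod_cast hx
  have hEαL : αL ≤ E := by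
    have := integral_mono_ae (integrable_const αL) hint hae
    simpa using this
  set rstar : ℝ := (1/2) * (E - k) with hrstar
  have hrstar_pos : 0 < rstar := by
    rw [hrstar]; nlinarith
  have hfix : rstar = mrl μ (k + rstar) := by
    rw [mrl_of_le_essinf μ hint hcont αL hae (k + rstar) (by rw [hrstar]; linarith)]
    rw [hrstar]; ring
  have hlt : (rstar : EReal) < rH := by
    have hb := ae_le_essSup (f := fun x : ℝ => (x : EReal)) (μ := μ)
    obtain ⟨S, hS⟩ : ∃ S, essSup (fun x : ℝ => (x : EReal)) μ = S := ⟨_, rfl⟩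
    rw [hS] at hb hrH
    clear hS
    induction S using EReal.rec with
    | bot =>
        rw [EReal.bot_sub] at hrH
        rw [hrH] at hrHpos
        exact absurd hrHpos (by simp)
    | top =>
        rw [EReal.top_sub_coe] at hrH
        rw [hrH]; exact EReal.coe_lt_top _
    | coe αH =>
        have haeH : ∀ᵐ x ∂μ, x ≤ αH := by
          filter_upwards [hb] with x hx
          exact_mod_cast hx
        have hEαH : E ≤ αH := by
          have := integral_mono_ae hint (integrable_const αH) haeH
          simpa using this
        rw [← EReal.coe_sub] at hrH
        have hpos : 0 < αH - k := by
          rw [hrH] at hrHpos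
          exact_mod_cast hrHpos
        rw [hrH, EReal.coe_lt_coe_iff, hrstar]
        linarith
  refine ⟨rstar, ⟨hrstar_pos, hlt⟩, hfix, ?_, by rw [hrstar, hk]⟩
  intro r _ _ hr
  rcases lt_trichotomy r rstar with h | h | h
  · exfalso
    have : rstar ≤ r := by
      calc rstar = mrl μ (k + rstar) := hfix
        _ ≤ mrl μ (k + r) := hdmrl (by linarith)
        _ = r := hr.symm
    linarith
  · exact h
  · exfalso
    have : r ≤ rstar := by
      calc r = mrl μ (k + r) := hr
        _ ≤ mrl μ (k + rstar) := hdmrl (by linarith)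
        _ = rstar := hfix.symm
    linarith
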